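/- Let E be the groupoid with involution whose objects are triples (x, y, φ) with x, y objects of U and φ : x → y an isomorphism in U, with the evident morphisms, and involution (x, y, φ) ↦ (υ(x), υ(y), υ(φ)) where υ is the involution of U. Then the equivariant functor U → E sending x to (x, x, 1_x) is not surjective onto the fixed points of E; in particular, the triple ((ℤ,ℤ,id_ℤ), (ℤ,ℤ,id_ℤ), (n ↦ −n, n ↦ −n)) is a fixed point of E not in the image. -/
import Mathlib


open CategoryTheory Cardinal

universe u

/-- An object of the universe U : a pair of κ-small sets with a bijection. -/
structure UObj (κ : Cardinal.{u}) where
  A : Type u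
  B : Type u
  hA : Cardinal.mk A < κ
  hB : Cardinal.mk B < κ
  e : A ≃ B

instance {κ : Cardinal.{u}} : Groupoid (UObj κ) where
  Hom X Y := {p : (X.A ≃ Y.A) × (X.B ≃ Y.B) // ∀ a, Y.e (p.1 a) = p.2 (X.e a)}
  id X := ⟨(Equiv.refl _, Equiv.refl _), fun _ => rfl⟩
  comp {X Y Z} p q := ⟨(p.1.1.trans q.1.1, p.1.2.trans q.1.2), fun a => by
    simp only [Equiv.trans_apply]; rw [q.2, p.2]⟩
  id_comp p := Subtype.ext (Prod.ext (Equiv.refl_trans _) (Equiv.refl_trans _))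
  comp_id p := Subtype.ext (Prod.ext (Equiv.trans_refl _) (Equiv.trans_refl _))
  assoc p q r := Subtype.ext (Prod.ext (Equiv.trans_assoc _ _ _).symm (Equiv.trans_assoc _ _ _).symm)
  inv {X Y} p := ⟨(p.1.1.symm, p.1.2.symm), fun a => p.1.2.injective (by
    rw [← p.2, Equiv.apply_symm_apply, Equiv.apply_symm_apply])⟩
  inv_comp p := Subtype.ext (Prod.ext (Equiv.symm_trans_self _) (Equiv.symm_trans_self _))
  comp_inv p := Subtype.ext (Prod.ext (Equiv.self_trans_symm _) (Equiv.self_trans_symm _))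

/-- The involution on U : swap the two sets. -/
def Uinv (κ : Cardinal.{u}) : UObj κ ⥤ UObj κ where
  obj X := ⟨X.B, X.A, X.hB, X.hA, X.e.symm⟩
  map {X Y} p := ⟨(p.1.2, p.1.1), fun b => Y.e.symm_apply_eq.mpr (by
    rw [p.2, Equiv.apply_symm_apply])⟩
  map_id _ := Subtype.ext rfl
  map_comp _ _ := Subtype.ext rfl

/-- An object of the universe Ũ : a pair of κ-small sets with a bijection and a
point (recorded symmetrically by its matched pair). -/
structure UtObj (κ : Cardinal.{u}) extends UObj κ where
  pt : A
  pt2 : B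
  hpt : e pt = pt2

instance {κ : Cardinal.{u}} : Groupoid (UtObj κ) where
  Hom X Y := {p : X.toUObj ⟶ Y.toUObj // p.1.1 X.pt = Y.pt}
  id X := ⟨𝟙 X.toUObj, rfl⟩
  comp {X Y Z} p q := ⟨p.1 ≫ q.1, by
    show q.1.1.1 (p.1.1.1 X.pt) = Z.pt
    rw [p.2, q.2]⟩
  id_comp p := Subtype.ext (Category.id_comp _)
  comp_id p := Subtype.ext (Category.comp_id _)
  assoc p q r := Subtype.ext (Category.assoc _ _ _)
  inv {X Y} p := ⟨Groupoid.inv p.1, p.1.1.1.symm_apply_eq.mpr p.2.symm⟩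
  inv_comp p := Subtype.ext (Groupoid.inv_comp _)
  comp_inv p := Subtype.ext (Groupoid.comp_inv _)

/-- The involution on Ũ. -/
def Utinv (κ : Cardinal.{u}) : UtObj κ ⥤ UtObj κ where
  obj X := ⟨⟨X.B, X.A, X.hB, X.hA, X.e.symm⟩, X.pt2, X.pt, by
    rw [← X.hpt, Equiv.symm_apply_apply]⟩
  map {X Y} p := ⟨(Uinv κ).map p.1, by
    show p.1.1.2 X.pt2 = Y.pt2
    rw [← X.hpt, ← p.1.2, p.2, Y.hpt]⟩
  map_id _ := Subtype.ext rfl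
  map_comp _ _ := Subtype.ext rfl

/-- The universal fibration p : Ũ → U, forgetting the point. -/
def pFun (κ : Cardinal.{u}) : UtObj κ ⥤ UObj κ where
  obj X := X.toUObj
  map p := p.1

/-- The objects of E : isomorphisms of U. -/
def EObj (κ : Cardinal.{u}) := Σ (X : UObj κ) (Y : UObj κ), X ⟶ Y

/-- The involution of E on objects, induced by the involution of U. -/
def Einv (κ : Cardinal.{u}) : EObj κ → EObj κ :=
  fun w => ⟨(Uinv κ).obj w.1, (Uinv κ).obj w.2.1, (Uinv κ).map w.2.2⟩

/-- The map U → E on objects, sending x to its identity. -/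
def unitE (κ : Cardinal.{u}) : UObj κ → EObj κ := fun X => ⟨X, X, 𝟙 X⟩

/-- the map U → E is not surjective onto fixed points of E; the triple
((ℤ,ℤ,id), (ℤ,ℤ,id), (n ↦ -n, n ↦ -n)) is a fixed point of E not in the image. -/
theorem stmt14 (κ : Cardinal.{0}) (hκ : κ.IsInaccessible) (hZ : Cardinal.mk ℤ < κ) :
    Einv κ ⟨⟨ℤ, ℤ, hZ, hZ, Equiv.refl ℤ⟩, ⟨ℤ, ℤ, hZ, hZ, Equiv.refl ℤ⟩,
        ⟨(Equiv.neg ℤ, Equiv.neg ℤ), fun _ => rfl⟩⟩ =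
      ⟨⟨ℤ, ℤ, hZ, hZ, Equiv.refl ℤ⟩, ⟨ℤ, ℤ, hZ, hZ, Equiv.refl ℤ⟩,
        ⟨(Equiv.neg ℤ, Equiv.neg ℤ), fun _ => rfl⟩⟩ ∧
    ∀ x : UObj κ, unitE κ x ≠
      ⟨⟨ℤ, ℤ, hZ, hZ, Equiv.refl ℤ⟩, ⟨ℤ, ℤ, hZ, hZ, Equiv.refl ℤ⟩,
        ⟨(Equiv.neg ℤ, Equiv.neg ℤ), fun _ => rfl⟩⟩ := by
  constructor
  · rfl
  · intro x h
    have h1 : x = ⟨ℤ, ℤ, hZ, hZ, Equiv.refl ℤ⟩ := congrArg Sigma.fst h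
    subst h1
    have h2 : (⟨⟨ℤ, ℤ, hZ, hZ, Equiv.refl ℤ⟩, 𝟙 _⟩ :
        Σ Y, (⟨ℤ, ℤ, hZ, hZ, Equiv.refl ℤ⟩ : UObj κ) ⟶ Y) =
        ⟨⟨ℤ, ℤ, hZ, hZ, Equiv.refl ℤ⟩, ⟨(Equiv.neg ℤ, Equiv.neg ℤ), fun _ => rfl⟩⟩ :=
      eq_of_heq (Sigma.mk.inj_iff.mp h).2
    have h3 := eq_of_heq (Sigma.mk.inj_iff.mp h2).2
    have := congrArg (fun p => p.1.1 (1 : ℤ)) h3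
    simp [CategoryStruct.id] at this
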